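/- Let H be a simple connected graph with m edges. Then H has an orientation of its edges in which every vertex has even out-degree if and only if m is even. -/

import Mathlib

/-- Out-degree of `v` under a Bool-valued orientation `o`. -/
def outdeg {V : Type*} [Fintype V] (o : V → V → Bool) (v : V) : ℕ :=
  (Finset.univ.filter fun w => o v w = true).card

namespace EvenOri

open Finset

variable {V : Type*} [Fintype V] [DecidableEq V]

/-- Validity of an orientation for graph `G`. -/
def Valid (G : SimpleGraph V) (o : V → V → Bool) : Prop :=
  (∀ v w, o v w = true → G.Adj v w) ∧ (∀ v w, G.Adj v w → o v w = !o w v)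

/-- Out-degree parity, in `ZMod 2`. -/
def P (o : V → V → Bool) (v : V) : ZMod 2 := (outdeg o v : ZMod 2)

lemma P_eq_sum (o : V → V → Bool) (v : V) :
    P o v = ∑ w, (if o v w = true then (1 : ZMod 2) else 0) := by
  unfold P outdeg
  rw [Finset.card_filter]
  push_cast
  apply Finset.sum_congr rfl
  intro w _
  split <;> simp

/-- Flip the orientation of edge `{a,b}`. -/
def flip (a b : V) (o : V → V → Bool) : V → V → Bool :=
  fun x y => if (x = a ∧ y = b) ∨ (x = b ∧ y = a) then !(o x y) else o x y

lemma flip_valid {G : SimpleGraph V} {o : V → V → Bool} (hab : G.Adj a b)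
    (h : Valid G o) : Valid G (flip a b o) := by
  obtain ⟨h1, h2⟩ := h
  constructor
  · intro v w hvw
    unfold flip at hvw
    split at hvw
    · rcases ‹_ ∨ _› with ⟨rfl, rfl⟩ | ⟨rfl, rfl⟩
      · exact hab
      · exact hab.symm
    · exact h1 v w hvw
  · intro v w hvw
    unfold flip
    have hne : a ≠ b := hab.ne
    by_cases hc : (v = a ∧ w = b) ∨ (v = b ∧ w = a)
    · rcases hc with ⟨rfl, rfl⟩ | ⟨rfl, rfl⟩
      · simp [hne, hne.symm, h2 _ _ hvw]
      · simp [hne, hne.symm, h2 _ _ hvw]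
    · have hc' : ¬ ((w = a ∧ v = b) ∨ (w = b ∧ v = a)) := by
        intro h'; apply hc; tauto
      simp only [hc, hc', if_neg, ite_false]
      exact h2 _ _ hvw
  
lemma ite_not_bool (x : Bool) :
    (if (!x) = true then (1 : ZMod 2) else 0) = (if x = true then (1 : ZMod 2) else 0) + 1 := by
  cases x <;> decide

lemma flip_apply_left {a b : V} (hne : a ≠ b) (o : V → V → Bool) (w : V) :
    flip a b o a w = if w = b then !(o a w) else o a w := by
  unfold flip
  by_cases hwb : w = b
  · simp [hwb]
  · have : ¬ ((a = a ∧ w = b) ∨ (a = b ∧ w = a)) := by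
      intro h; rcases h with ⟨_, h⟩ | ⟨h, _⟩ <;> [exact hwb h; exact hne h]
    rw [if_neg this, if_neg hwb]

lemma flip_apply_right {a b : V} (hne : a ≠ b) (o : V → V → Bool) (w : V) :
    flip a b o b w = if w = a then !(o b w) else o b w := by
  unfold flip
  by_cases hwa : w = a
  · simp [hwa, hne.symm]
  · have : ¬ ((b = a ∧ w = b) ∨ (b = b ∧ w = a)) := by
      intro h; rcases h with ⟨h, _⟩ | ⟨_, h⟩ <;> [exact hne h.symm; exact hwa h]
    rw [if_neg this, if_neg hwa]

lemma flip_apply_other {a b y : V} (hya : y ≠ a) (hyb : y ≠ b) (o : V → V → Bool) (w : V) :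
    flip a b o y w = o y w := by
  unfold flip
  have : ¬ ((y = a ∧ w = b) ∨ (y = b ∧ w = a)) := by
    intro h; rcases h with ⟨h, _⟩ | ⟨h, _⟩ <;> [exact hya h; exact hyb h]
  rw [if_neg this]

lemma P_swap_aux {b : V} (o : V → V → Bool) (y : V)
    (hy : ∀ w, o' y w = if w = b then !(o y w) else o y w) :
    P o' y = P o y + 1 := by
  rw [P_eq_sum, P_eq_sum]
  have hterm : ∀ w, (if o' y w = true then (1 : ZMod 2) else 0)
      = (if o y w = true then (1 : ZMod 2) else 0) + (if w = b then 1 else 0) := by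
    intro w
    rw [hy w]
    by_cases hwb : w = b
    · simp only [hwb, if_true, ite_not_bool]
    · simp [hwb]
  simp only [hterm, Finset.sum_add_distrib,
    Finset.sum_ite_eq' Finset.univ b (fun _ => (1 : ZMod 2)), Finset.mem_univ, if_true]

lemma P_flip {a b : V} (hne : a ≠ b) (o : V → V → Bool) (y : V) :
    P (flip a b o) y = P o y + (if y = a then 1 else 0) + (if y = b then 1 else 0) := by
  by_cases hya : y = a
  · subst hya
    rw [P_swap_aux o y (flip_apply_left hne o)]
    simp [hne]
  · by_cases hyb : y = b
    · subst hyb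
      rw [P_swap_aux o y (flip_apply_right hne o)]
      simp [hya]
    · have : ∀ w, flip a b o y w = o y w := flip_apply_other hya hyb o
      rw [P_eq_sum, P_eq_sum]
      simp [this, hya, hyb]

variable {G : SimpleGraph V}

/-- Flip the orientation along all edges of a walk. -/
def flipWalk : {u v : V} → G.Walk u v → (V → V → Bool) → (V → V → Bool)
  | _, _, .nil, o => o
  | u, _, .cons (v := x) _ p, o => flipWalk p (flip u x o)

lemma flipWalk_valid {u v : V} (p : G.Walk u v) {o : V → V → Bool}
    (h : Valid G o) : Valid G (flipWalk p o) := by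
  induction p generalizing o with
  | nil => exact h
  | cons hadj p ih => exact ih (flip_valid hadj h)

lemma P_flipWalk {u v : V} (p : G.Walk u v) (o : V → V → Bool) (y : V) :
    P (flipWalk p o) y = P o y + (if y = u then 1 else 0) + (if y = v then 1 else 0) := by
  induction p generalizing o with
  | nil =>
    show P o y = _
    have : ∀ a : ZMod 2, a + a = 0 := by decide
    rw [add_assoc, this, add_zero]
  | @cons u x v hadj p ih =>
    show P (flipWalk p (flip u x o)) y = _
    rw [ih, P_flip hadj.ne o y]
    have : ∀ a b c d : ZMod 2, a + b + c + c + d = a + b + d := by decide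
    rw [show P o y + (if y = u then 1 else 0) + (if y = x then 1 else 0)
        + (if y = x then 1 else 0) + (if y = v then 1 else 0)
        = P o y + (if y = u then 1 else 0) + (if y = v then 1 else 0) from this ..]

lemma even_iff_cast (n : ℕ) : Even n ↔ (n : ZMod 2) = 0 := by
  rw [ZMod.natCast_eq_zero_iff]
  exact even_iff_two_dvd

lemma sum_outdeg [DecidableRel G.Adj] {o : V → V → Bool} (h : Valid G o) :
    ∑ v, outdeg o v = G.edgeFinset.card := by
  have key : ((Finset.univ ×ˢ Finset.univ).filter fun p : V × V => o p.1 p.2 = true).card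
      = G.edgeFinset.card := by
    apply Finset.card_nbij (fun p : V × V => Sym2.mk p.1 p.2)
    · intro p hp
      rw [Finset.mem_coe, Finset.mem_filter] at hp
      rw [Finset.mem_coe, SimpleGraph.mem_edgeFinset]
      exact h.1 _ _ hp.2
    · intro p hp q hq hpq
      simp only [Finset.coe_filter, Set.mem_setOf_eq] at hp hq
      have hpq' : s(p.1, p.2) = s(q.1, q.2) := hpq
      rw [Sym2.eq_iff] at hpq'
      rcases hpq' with ⟨h1, h2⟩ | ⟨h1, h2⟩
      · exact Prod.ext h1 h2
      · exfalso
        have hadj : G.Adj p.1 p.2 := h.1 _ _ hp.2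
        have hh := h.2 _ _ hadj
        rw [hp.2] at hh
        rw [← h1, ← h2] at hq
        rw [hq.2] at hh
        simp at hh
    · intro e he
      rw [Finset.mem_coe, SimpleGraph.mem_edgeFinset] at he
      induction e using Sym2.ind with
      | _ a b =>
        rw [SimpleGraph.mem_edgeSet] at he
        have hh := h.2 _ _ he
        cases hab : o a b with
        | true =>
          exact ⟨(a, b), by simp [hab], rfl⟩
        | false =>
          have : o b a = true := by
            rw [hab] at hh
            cases hba : o b a
            · rw [hba] at hh; simp at hh
            · rfl
          exact ⟨(b, a), by simp [this], Sym2.eq_swap⟩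
  rw [← key, Finset.card_filter, Finset.sum_product]
  apply Finset.sum_congr rfl
  intro v _
  rw [outdeg, Finset.card_filter]

lemma card_odd_cast [DecidableRel G.Adj] {o : V → V → Bool} (h : Valid G o) :
    (((Finset.univ.filter fun v => P o v = 1).card : ZMod 2)) = (G.edgeFinset.card : ZMod 2) := by
  rw [← sum_outdeg h, Finset.card_filter]
  push_cast
  apply Finset.sum_congr rfl
  intro v _
  have : ∀ a : ZMod 2, (if a = 1 then (1 : ZMod 2) else 0) = a := by decide
  exact this (P o v)

lemma fix_aux [DecidableRel G.Adj] (hconn : G.Connected) :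
    ∀ n, ∀ o : V → V → Bool, Valid G o →
    (Finset.univ.filter fun v => P o v = 1).card = n → Even n →
    ∃ o', Valid G o' ∧ ∀ v, P o' v = 0 := by
  intro n
  induction n using Nat.strong_induction_on with
  | _ n ih =>
    intro o ho hcard heven
    rcases Nat.eq_zero_or_pos n with hz | hpos
    · refine ⟨o, ho, fun v => ?_⟩
      subst hz
      rw [Finset.card_eq_zero] at hcard
      have hv : v ∉ Finset.univ.filter fun v => P o v = 1 := by rw [hcard]; exact Finset.notMem_empty v
      simp only [Finset.mem_filter, Finset.mem_univ, true_and] at hv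
      have : ∀ a : ZMod 2, a ≠ 1 → a = 0 := by decide
      exact this _ hv
    · obtain ⟨k, hk⟩ := heven
      have h2n : 1 < n := by omega
      rw [← hcard, Finset.one_lt_card] at h2n
      obtain ⟨u, hu, v, hv, huv⟩ := h2n
      simp only [Finset.mem_filter, Finset.mem_univ, true_and] at hu hv
      obtain ⟨p⟩ := hconn.preconnected u v
      set o' := flipWalk p o with ho'
      have hval' : Valid G o' := flipWalk_valid p ho
      have hP : ∀ y, P o' y = P o y + (if y = u then 1 else 0) + (if y = v then 1 else 0) :=
        P_flipWalk p o
      have hset : (Finset.univ.filter fun y => P o' y = 1)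
          = (Finset.univ.filter fun y => P o y = 1) \ {u, v} := by
        ext y
        simp only [Finset.mem_filter, Finset.mem_univ, true_and, Finset.mem_sdiff,
          Finset.mem_insert, Finset.mem_singleton]
        rw [hP y]
        by_cases hyu : y = u
        · subst hyu
          rw [if_pos rfl, if_neg huv, hu]
          simp
        · by_cases hyv : y = v
          · subst hyv
            rw [if_neg hyu, if_pos rfl, hv]
            simp
          · rw [if_neg hyu, if_neg hyv, add_zero, add_zero]
            tauto
      have hsub : {u, v} ⊆ (Finset.univ.filter fun y => P o y = 1) := by
        intro y hy
        simp only [Finset.mem_insert, Finset.mem_singleton] at hy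
        rcases hy with rfl | rfl <;> simp [hu, hv]
      have hcard2 : ({u, v} : Finset V).card = 2 := Finset.card_pair huv
      have hcard' : (Finset.univ.filter fun y => P o' y = 1).card = n - 2 := by
        rw [hset, Finset.card_sdiff_of_subset hsub, hcard2, hcard]
      exact ih (n - 2) (by omega) o' hval' hcard' ⟨k - 1, by omega⟩

end EvenOri

/-- A simple connected graph with `m` edges has an orientation in which every vertex
has even out-degree iff `m` is even. -/
theorem even_orientation_iff_even_edges {V : Type*} [Fintype V] [DecidableEq V]
    (G : SimpleGraph V) [DecidableRel G.Adj] (hconn : G.Connected)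
    (m : ℕ) (hm : G.edgeFinset.card = m) :
    (∃ o : V → V → Bool,
        (∀ v w, o v w = true → G.Adj v w) ∧
        (∀ v w, G.Adj v w → o v w = !o w v) ∧
        (∀ v, Even (outdeg o v))) ↔ Even m := by
  constructor
  · rintro ⟨o, h1, h2, h3⟩
    have hval : EvenOri.Valid G o := ⟨h1, h2⟩
    rw [← hm, ← EvenOri.sum_outdeg hval]
    exact Finset.even_sum _ fun v _ => h3 v
  · intro hmeven
    set e : V ≃ Fin (Fintype.card V) := Fintype.equivFin V with he
    set o0 : V → V → Bool := fun v w => decide (G.Adj v w) && decide (e v < e w) with ho0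
    have hval : EvenOri.Valid G o0 := by
      constructor
      · intro v w hvw
        simp only [ho0, Bool.and_eq_true, decide_eq_true_eq] at hvw
        exact hvw.1
      · intro v w hadj
        have hne : e v ≠ e w := fun h => hadj.ne (e.injective h)
        rcases hne.lt_or_gt with h | h
        · simp [ho0, hadj, hadj.symm, h, h.asymm]
        · simp [ho0, hadj, hadj.symm, h, h.asymm]
    have hcast : (((Finset.univ.filter fun v => EvenOri.P o0 v = 1).card : ZMod 2)) = 0 := by
      rw [EvenOri.card_odd_cast hval, hm]
      exact (EvenOri.even_iff_cast m).mp hmeven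
    have heven : Even (Finset.univ.filter fun v => EvenOri.P o0 v = 1).card :=
      (EvenOri.even_iff_cast _).mpr hcast
    obtain ⟨o', hval', hP'⟩ := EvenOri.fix_aux hconn _ o0 hval rfl heven
    refine ⟨o', hval'.1, hval'.2, fun v => ?_⟩
    have := hP' v
    rw [EvenOri.P, ← EvenOri.even_iff_cast] at this
    exact this
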